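/- Fix a real exponent p > 5. There exists a constant C_p > 0 such that for every real φ > 0 and every w ∈ ℂ, | |φ + w|^{p-1}·(φ + w) - φ^p - ((p+1)/2)·φ^{p-1}·w - ((p-1)/2)·φ^{p-1}·conj(w) | ≤ C_p·(φ^{p-2}·|w|² + |w|^p). -/

import Mathlib

open Real Complex

noncomputable section
namespace NRB

def hf (φ : ℝ) (w : ℂ) (t : ℝ) : ℝ := φ^2 + 2*φ*w.re*t + ‖w‖^2 * t^2
def hf' (φ : ℝ) (w : ℂ) (t : ℝ) : ℝ := 2*φ*w.re + ‖w‖^2*(2*t)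
def zf (φ : ℝ) (w : ℂ) (t : ℝ) : ℂ := (φ:ℂ) + (t:ℂ)*w
def Af (p φ : ℝ) (w : ℂ) (t : ℝ) : ℝ :=
  hf' φ w t * ((p-1)/2) * hf φ w t ^ ((p-1)/2 - 1)
def Af' (p φ : ℝ) (w : ℂ) (t : ℝ) : ℝ :=
  ‖w‖^2*2 * ((p-1)/2) * hf φ w t ^ ((p-1)/2 - 1)
    + hf' φ w t * ((p-1)/2) * (hf' φ w t * ((p-1)/2 - 1) * hf φ w t ^ ((p-1)/2 - 1 - 1))
def gf (p φ : ℝ) (w : ℂ) (t : ℝ) : ℂ := ((hf φ w t ^ ((p-1)/2) : ℝ):ℂ) * zf φ w t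
def gf' (p φ : ℝ) (w : ℂ) (t : ℝ) : ℂ :=
  ((Af p φ w t : ℝ):ℂ) * zf φ w t + ((hf φ w t ^ ((p-1)/2) : ℝ):ℂ) * w
def gf'' (p φ : ℝ) (w : ℂ) (t : ℝ) : ℂ :=
  ((Af' p φ w t : ℝ):ℂ) * zf φ w t + 2*((Af p φ w t : ℝ):ℂ)*w

lemma hf_eq (φ : ℝ) (w : ℂ) (t : ℝ) :
    hf φ w t = ‖(φ:ℂ) + (t:ℂ)*w‖ ^ 2 := by
  rw [Complex.sq_norm, Complex.normSq_apply]
  have : ‖w‖ ^ 2 = w.re^2 + w.im^2 := by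
    rw [Complex.sq_norm, Complex.normSq_apply]; ring
  simp [hf, this]
  ring

lemma hasDerivAt_hf (φ : ℝ) (w : ℂ) (t : ℝ) : HasDerivAt (hf φ w) (hf' φ w t) t := by
  have h1 : HasDerivAt (fun t : ℝ => φ^2 + 2*φ*w.re*t + ‖w‖^2 * t^2)
      (2*φ*w.re + ‖w‖^2*(2*t)) t := by
    have := (((hasDerivAt_id t).const_mul (2*φ*w.re)).const_add (φ^2)).add
      ((hasDerivAt_pow 2 t).const_mul (‖w‖^2))
    refine this.congr_deriv ?_
    ring
  exact h1

lemma hasDerivAt_hf' (φ : ℝ) (w : ℂ) (t : ℝ) :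
    HasDerivAt (hf' φ w) (‖w‖^2*2) t := by
  have := ((((hasDerivAt_id t).const_mul (2:ℝ)).const_mul
      (‖w‖^2)).const_add (2*φ*w.re))
  refine this.congr_deriv ?_
  ring

lemma hasDerivAt_zf (φ : ℝ) (w : ℂ) (t : ℝ) : HasDerivAt (zf φ w) w t := by
  have h0 : HasDerivAt (fun t : ℝ => (t:ℂ)) 1 t := by
    simpa using (hasDerivAt_id t).ofReal_comp
  exact ((h0.mul_const w).const_add (φ:ℂ)).congr_deriv (by simp)

lemma hasDerivAt_gf (p φ : ℝ) (w : ℂ) (t : ℝ) (h0 : hf φ w t ≠ 0) :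
    HasDerivAt (gf p φ w) (gf' p φ w t) t := by
  have hr : HasDerivAt (fun t => hf φ w t ^ ((p-1)/2))
      (hf' φ w t * ((p-1)/2) * hf φ w t ^ ((p-1)/2 - 1)) t :=
    (hasDerivAt_hf φ w t).rpow_const (Or.inl h0)
  exact (hr.ofReal_comp).mul (hasDerivAt_zf φ w t)

lemma hasDerivAt_gf' (p φ : ℝ) (w : ℂ) (t : ℝ) (h0 : hf φ w t ≠ 0) :
    HasDerivAt (gf' p φ w) (gf'' p φ w t) t := by
  have hA : HasDerivAt (fun t => Af p φ w t) (Af' p φ w t) t := by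
    have h1 : HasDerivAt (fun t => hf' φ w t * ((p-1)/2))
        (‖w‖^2*2 * ((p-1)/2)) t := (hasDerivAt_hf' φ w t).mul_const _
    have h2 : HasDerivAt (fun t => hf φ w t ^ ((p-1)/2 - 1))
        (hf' φ w t * ((p-1)/2 - 1) * hf φ w t ^ ((p-1)/2 - 1 - 1)) t :=
      (hasDerivAt_hf φ w t).rpow_const (Or.inl h0)
    exact h1.mul h2
  have hrA : HasDerivAt (fun t => ((Af p φ w t : ℝ):ℂ)) ((Af' p φ w t : ℝ):ℂ) t :=
    hA.ofReal_comp
  have hr : HasDerivAt (fun t => ((hf φ w t ^ ((p-1)/2) : ℝ):ℂ)) ((Af p φ w t : ℝ):ℂ) t :=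
    ((hasDerivAt_hf φ w t).rpow_const (p := (p-1)/2) (Or.inl h0)).ofReal_comp
  have := (hrA.mul (hasDerivAt_zf φ w t)).add (hr.mul_const w)
  refine this.congr_deriv ?_
  simp [gf'']
  ring


lemma taylor2 {g g' g'' : ℝ → ℂ} {M : ℝ}
    (hg : ∀ t ∈ Set.Icc (0:ℝ) 1, HasDerivAt g (g' t) t)
    (hg' : ∀ t ∈ Set.Icc (0:ℝ) 1, HasDerivAt g' (g'' t) t)
    (hM : ∀ t ∈ Set.Icc (0:ℝ) 1, ‖g'' t‖ ≤ M) :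
    ‖g 1 - g 0 - g' 0‖ ≤ M := by
  have h01 : (0:ℝ) ∈ Set.Icc (0:ℝ) 1 := ⟨le_refl _, zero_le_one⟩
  have h11 : (1:ℝ) ∈ Set.Icc (0:ℝ) 1 := ⟨zero_le_one, le_refl _⟩
  have hM0 : 0 ≤ M := le_trans (norm_nonneg _) (hM 0 h01)
  have hconv : Convex ℝ (Set.Icc (0:ℝ) 1) := convex_Icc 0 1
  have step1 : ∀ t ∈ Set.Icc (0:ℝ) 1, ‖g' t - g' 0‖ ≤ M := by
    intro t ht
    calc ‖g' t - g' 0‖ ≤ M * ‖t - 0‖ :=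
          hconv.norm_image_sub_le_of_norm_hasDerivWithin_le
            (fun x hx => (hg' x hx).hasDerivWithinAt) hM h01 ht
      _ ≤ M * 1 := by
          apply mul_le_mul_of_nonneg_left _ hM0
          rw [sub_zero, Real.norm_eq_abs, _root_.abs_of_nonneg ht.1]; exact ht.2
      _ = M := mul_one M
  have hG : ∀ t ∈ Set.Icc (0:ℝ) 1,
      HasDerivWithinAt (fun t : ℝ => g t - (t:ℂ)*g' 0) (g' t - g' 0) (Set.Icc (0:ℝ) 1) t := by
    intro t ht
    have h0 : HasDerivAt (fun t : ℝ => (t:ℂ)) 1 t := by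
      simpa using (hasDerivAt_id t).ofReal_comp
    have := (hg t ht).sub (h0.mul_const (g' 0))
    rw [one_mul] at this
    exact this.hasDerivWithinAt
  have := hconv.norm_image_sub_le_of_norm_hasDerivWithin_le hG step1 h01 h11
  have e : (g 1 - ((1:ℝ):ℂ)*g' 0) - (g 0 - ((0:ℝ):ℂ)*g' 0) = g 1 - g 0 - g' 0 := by
    push_cast; ring
  rw [← e]
  simpa using this


lemma identify (p φ : ℝ) (hφ : 0 < φ) (w : ℂ) :
    ((‖(φ : ℂ) + w‖ ^ (p - 1) : ℝ) : ℂ) * ((φ : ℂ) + w)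
          - ((φ ^ p : ℝ) : ℂ)
          - (((p + 1) / 2 : ℝ) : ℂ) * ((φ ^ (p - 1) : ℝ) : ℂ) * w
          - (((p - 1) / 2 : ℝ) : ℂ) * ((φ ^ (p - 1) : ℝ) : ℂ) * starRingEnd ℂ w
      = gf p φ w 1 - gf p φ w 0 - gf' p φ w 0 := by
  have hφ0 : (0:ℝ) ≤ φ := hφ.le
  have habs : (0:ℝ) ≤ ‖(φ:ℂ) + w‖ := (norm_nonneg _)
  have i1 : hf φ w 1 ^ ((p-1)/2) = ‖(φ:ℂ) + w‖ ^ (p-1) := by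
    rw [hf_eq]
    push_cast
    rw [one_mul, ← Real.rpow_natCast (‖(φ:ℂ) + w‖) 2,
      ← Real.rpow_mul habs]
    norm_num
    congr 1
    ring
  have i2 : hf φ w 0 ^ ((p-1)/2) = φ ^ (p-1) := by
    have : hf φ w 0 = φ^2 := by simp [hf]
    rw [this, ← Real.rpow_natCast φ 2, ← Real.rpow_mul hφ0]
    norm_num
    congr 1
    ring
  have i3 : hf φ w 0 ^ ((p-1)/2 - 1) = φ ^ (p-3) := by
    have : hf φ w 0 = φ^2 := by simp [hf]
    rw [this, ← Real.rpow_natCast φ 2, ← Real.rpow_mul hφ0]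
    norm_num
    ring_nf
  have c4 : ((φ ^ (p-1) : ℝ):ℂ) * (φ:ℂ) = ((φ ^ p : ℝ):ℂ) := by
    rw [← Complex.ofReal_mul, ← Real.rpow_add_one hφ.ne']
    norm_num
  have c5 : ((φ ^ (p-3) : ℝ):ℂ) * (φ:ℂ) * (φ:ℂ) = ((φ ^ (p-1) : ℝ):ℂ) := by
    rw [← Complex.ofReal_mul, ← Complex.ofReal_mul, ← Real.rpow_add_one hφ.ne',
      ← Real.rpow_add_one hφ.ne']
    ring_nf
  have hconj : (starRingEnd ℂ) w = ((2*w.re : ℝ):ℂ) - w := by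
    rw [← Complex.add_conj]; push_cast; ring
  rw [hconj]
  simp only [gf, gf', Af, zf, i1, i2, i3]
  have hf'0 : hf' φ w 0 = 2*φ*w.re := by simp [hf']
  rw [hf'0]
  push_cast
  linear_combination (1:ℂ) * c4 + (p-1) * (w.re:ℂ) * c5

lemma aux_rpow (φ p e : ℝ) (hφ : 0 < φ) (x : ℝ) (hx0 : 0 ≤ x) (hx : x ≤ (2*φ)^2)
    (he : 0 ≤ e) (h2e : 2*e ≤ p) : x ^ e ≤ 3^p * φ^(2*e) := by
  calc x ^ e ≤ ((2*φ)^2) ^ e := Real.rpow_le_rpow hx0 hx he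
    _ = (2*φ) ^ (2*e) := by
        rw [← Real.rpow_natCast (2*φ) 2, ← Real.rpow_mul (by positivity)]
        norm_num
    _ = 2^(2*e) * φ^(2*e) := Real.mul_rpow (by norm_num) hφ.le
    _ ≤ 3^p * φ^(2*e) := by
        apply mul_le_mul_of_nonneg_right _ (Real.rpow_nonneg hφ.le _)
        calc (2:ℝ)^(2*e) ≤ 3^(2*e) :=
              Real.rpow_le_rpow (by norm_num) (by norm_num) (by linarith)
          _ ≤ 3^p := Real.rpow_le_rpow_of_exponent_le (by norm_num) (by linarith)

set_option maxHeartbeats 1000000 in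
lemma gf''_bound (p φ : ℝ) (hp : 5 < p) (hφ : 0 < φ) (w : ℂ)
    (hw : ‖w‖ ≤ φ/2) (t : ℝ) (ht : t ∈ Set.Icc (0:ℝ) 1) :
    ‖gf'' p φ w t‖ ≤ 40*p^2*3^p*(φ^(p-2)*‖w‖^2) := by
  obtain ⟨ht0, ht1⟩ := ht
  set b := ‖w‖ with hbdef
  have hb0 : 0 ≤ b := norm_nonneg w
  have hp0 : (0:ℝ) ≤ p := by linarith
  have habsφ : ‖(φ:ℂ)‖ = φ := by
    rw [Complex.norm_real, Real.norm_eq_abs, _root_.abs_of_pos hφ]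
  have habstw : ‖(t:ℂ)*w‖ = t * b := by
    rw [norm_mul, Complex.norm_real, Real.norm_eq_abs, _root_.abs_of_nonneg ht0]
  have hzb : ‖zf φ w t‖ ≤ 2*φ := by
    calc ‖zf φ w t‖ ≤ ‖(φ:ℂ)‖ + ‖(t:ℂ)*w‖ :=
          norm_add_le _ _
      _ = φ + t*b := by rw [habsφ, habstw]
      _ ≤ 2*φ := by nlinarith
  have habslo : φ/2 ≤ ‖zf φ w t‖ := by
    have h1 := norm_add_le (zf φ w t) (-((t:ℂ)*w))
    have h2 : zf φ w t + -((t:ℂ)*w) = (φ:ℂ) := by simp [zf]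
    rw [h2, habsφ, norm_neg, habstw] at h1
    nlinarith
  have hfz : hf φ w t = ‖zf φ w t‖ ^ 2 := hf_eq φ w t
  have hlo : φ^2/4 ≤ hf φ w t := by
    rw [hfz]
    calc φ^2/4 = (φ/2)^2 := by ring
      _ ≤ ‖zf φ w t‖ ^ 2 := pow_le_pow_left₀ (by positivity) habslo 2
  have hfpos : 0 < hf φ w t := lt_of_lt_of_le (by positivity) hlo
  have hhi : hf φ w t ≤ (2*φ)^2 := by
    rw [hfz]; exact pow_le_pow_left₀ (norm_nonneg _) hzb 2
  have hh'b : |hf' φ w t| ≤ 3*φ*b := by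
    have hre : |w.re| ≤ b := Complex.abs_re_le_norm w
    have h1 : |2*φ*w.re| ≤ 2*φ*b := by
      rw [abs_mul, _root_.abs_of_nonneg (by positivity : (0:ℝ) ≤ 2*φ)]
      exact mul_le_mul_of_nonneg_left hre (by positivity)
    have h2 : |b^2*(2*t)| ≤ 2*b^2 := by
      rw [_root_.abs_of_nonneg (by positivity : (0:ℝ) ≤ b^2*(2*t))]
      nlinarith [sq_nonneg b]
    calc |hf' φ w t| ≤ |2*φ*w.re| + |b^2*(2*t)| := abs_add_le _ _
      _ ≤ 2*φ*b + 2*b^2 := by linarith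
      _ ≤ 3*φ*b := by nlinarith
  set P := (3:ℝ)^p with hPdef
  have hP0 : 0 < P := Real.rpow_pos_of_pos (by norm_num) p
  have hr1 : hf φ w t ^ ((p-1)/2 - 1) ≤ P * φ^(p-3) := by
    have := aux_rpow φ p ((p-1)/2 - 1) hφ (hf φ w t) hfpos.le hhi (by linarith) (by linarith)
    have he : (2:ℝ)*((p-1)/2-1) = p - 3 := by ring
    rwa [he] at this
  have hr2 : hf φ w t ^ ((p-1)/2 - 1 - 1) ≤ P * φ^(p-5) := by
    have := aux_rpow φ p ((p-1)/2 - 1 - 1) hφ (hf φ w t) hfpos.le hhi (by linarith) (by linarith)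
    have he : (2:ℝ)*((p-1)/2-1-1) = p - 5 := by ring
    rwa [he] at this
  have hα0 : (0:ℝ) ≤ (p-1)/2 := by linarith
  have hrp1 : (0:ℝ) ≤ hf φ w t ^ ((p-1)/2 - 1) := Real.rpow_nonneg hfpos.le _
  have hrp2 : (0:ℝ) ≤ hf φ w t ^ ((p-1)/2 - 1 - 1) := Real.rpow_nonneg hfpos.le _
  have hE2 : (0:ℝ) ≤ 3*φ*b*p := mul_nonneg (by positivity) hp0
  have nAf : |Af p φ w t| ≤ 3*φ*b*p*(P*φ^(p-3)) := by
    rw [Af, abs_mul, abs_mul, _root_.abs_of_nonneg hα0,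
      _root_.abs_of_nonneg hrp1]
    apply mul_le_mul _ hr1 hrp1 hE2
    apply mul_le_mul hh'b (by linarith) hα0 (by positivity)
  have nAf' : |Af' p φ w t| ≤ b^2*2*p*(P*φ^(p-3)) + 3*φ*b*p*(3*φ*b*p*(P*φ^(p-5))) := by
    have n1 : |b^2*2*((p-1)/2) * hf φ w t ^ ((p-1)/2-1)| ≤ b^2*2*p*(P*φ^(p-3)) := by
      rw [abs_mul, abs_mul, abs_mul, _root_.abs_of_nonneg (sq_nonneg b),
        _root_.abs_of_nonneg (by norm_num : (0:ℝ) ≤ 2), _root_.abs_of_nonneg hα0,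
        _root_.abs_of_nonneg hrp1]
      apply mul_le_mul _ hr1 hrp1 (mul_nonneg (by positivity) hp0)
      apply mul_le_mul_of_nonneg_left (by linarith) (by positivity)
    have n2 : |hf' φ w t * ((p-1)/2) * (hf' φ w t * ((p-1)/2-1) * hf φ w t ^ ((p-1)/2-1-1))|
        ≤ 3*φ*b*p*(3*φ*b*p*(P*φ^(p-5))) := by
      rw [abs_mul, abs_mul, abs_mul, abs_mul, _root_.abs_of_nonneg hα0,
        _root_.abs_of_nonneg (by linarith : (0:ℝ) ≤ (p-1)/2-1), _root_.abs_of_nonneg hrp2]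
      apply mul_le_mul _ _ (mul_nonneg (mul_nonneg (abs_nonneg _) (by linarith)) hrp2) hE2
      · apply mul_le_mul hh'b (by linarith) hα0 (by positivity)
      · apply mul_le_mul _ hr2 hrp2 hE2
        apply mul_le_mul hh'b (by linarith) (by linarith) (by positivity)
    calc |Af' p φ w t| ≤ _ := abs_add_le _ _
      _ ≤ _ := add_le_add n1 n2
  have hnorm : ‖gf'' p φ w t‖ ≤ |Af' p φ w t| * ‖zf φ w t‖
      + 2*(|Af p φ w t| * b) := by
    calc ‖gf'' p φ w t‖ ≤ ‖((Af' p φ w t : ℝ):ℂ) * zf φ w t‖ + ‖2*((Af p φ w t : ℝ):ℂ)*w‖ :=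
          norm_add_le _ _
      _ = |Af' p φ w t| * ‖zf φ w t‖ + 2*(|Af p φ w t| * b) := by
          simp [norm_mul, Complex.norm_real, Real.norm_eq_abs]
          ring
  have e1 : φ^(p-3)*φ = φ^(p-2) := by
    rw [← Real.rpow_add_one hφ.ne']; congr 1; ring
  have e2 : φ^(p-5)*φ*φ*φ = φ^(p-2) := by
    rw [← Real.rpow_add_one hφ.ne', ← Real.rpow_add_one hφ.ne',
      ← Real.rpow_add_one hφ.ne']
    congr 1; ring
  have hQ : (0:ℝ) ≤ P*(φ^(p-2)*b^2) := by positivity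
  calc ‖gf'' p φ w t‖ ≤ |Af' p φ w t| * ‖zf φ w t‖ + 2*(|Af p φ w t| * b) := hnorm
    _ ≤ (b^2*2*p*(P*φ^(p-3)) + 3*φ*b*p*(3*φ*b*p*(P*φ^(p-5))))*(2*φ)
        + 2*((3*φ*b*p*(P*φ^(p-3)))*b) := by
        apply add_le_add
        · exact mul_le_mul nAf' hzb (norm_nonneg _) (le_trans (abs_nonneg _) nAf')
        · apply mul_le_mul_of_nonneg_left _ (by norm_num)
          exact mul_le_mul_of_nonneg_right nAf hb0
    _ = 4*p*P*b^2*(φ^(p-3)*φ) + 18*p^2*P*b^2*(φ^(p-5)*φ*φ*φ)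
        + 6*p*P*b^2*(φ^(p-3)*φ) := by ring
    _ = (4*p + 18*p^2 + 6*p) * (P*(φ^(p-2)*b^2)) := by rw [e1, e2]; ring
    _ ≤ 40*p^2*P*(φ^(p-2)*b^2) := by
        have h22 : 0 ≤ 22*p^2 - 10*p := by nlinarith
        nlinarith [mul_nonneg h22 hQ]

lemma hf_pos (φ : ℝ) (hφ : 0 < φ) (w : ℂ) (hw : ‖w‖ ≤ φ/2)
    (t : ℝ) (ht : t ∈ Set.Icc (0:ℝ) 1) : 0 < hf φ w t := by
  obtain ⟨ht0, ht1⟩ := ht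
  have habsφ : ‖(φ:ℂ)‖ = φ := by
    rw [Complex.norm_real, Real.norm_eq_abs, _root_.abs_of_pos hφ]
  have habstw : ‖(t:ℂ)*w‖ = t * ‖w‖ := by
    rw [norm_mul, Complex.norm_real, Real.norm_eq_abs, _root_.abs_of_nonneg ht0]
  have h1 := norm_add_le ((φ:ℂ) + (t:ℂ)*w) (-((t:ℂ)*w))
  have h2 : (φ:ℂ) + (t:ℂ)*w + -((t:ℂ)*w) = (φ:ℂ) := by ring
  rw [h2, habsφ, norm_neg, habstw] at h1
  have hb0 : 0 ≤ ‖w‖ := norm_nonneg w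
  have hlo : φ/2 ≤ ‖(φ:ℂ) + (t:ℂ)*w‖ := by nlinarith
  have := hf_eq φ w t
  rw [this]
  nlinarith

lemma small (p φ : ℝ) (hp : 5 < p) (hφ : 0 < φ) (w : ℂ) (hw : ‖w‖ ≤ φ/2) :
    ‖gf p φ w 1 - gf p φ w 0 - gf' p φ w 0‖
      ≤ 40*p^2*3^p*(φ^(p-2)*‖w‖^2) := by
  apply taylor2 (g' := gf' p φ w) (g'' := gf'' p φ w)
  · intro t ht
    exact hasDerivAt_gf p φ w t (hf_pos φ hφ w hw t ht).ne'
  · intro t ht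
    exact hasDerivAt_gf' p φ w t (hf_pos φ hφ w hw t ht).ne'
  · intro t ht
    exact gf''_bound p φ hp hφ w hw t ht

lemma big (p φ : ℝ) (hp : 5 < p) (hφ : 0 < φ) (w : ℂ) (hw : φ/2 ≤ ‖w‖) :
    ‖((‖(φ : ℂ) + w‖ ^ (p - 1) : ℝ) : ℂ) * ((φ : ℂ) + w)
          - ((φ ^ p : ℝ) : ℂ)
          - (((p + 1) / 2 : ℝ) : ℂ) * ((φ ^ (p - 1) : ℝ) : ℂ) * w
          - (((p - 1) / 2 : ℝ) : ℂ) * ((φ ^ (p - 1) : ℝ) : ℂ) * starRingEnd ℂ w‖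
      ≤ (3^p + 2^p + p*2^p) * ‖w‖ ^ p := by
  set b := ‖w‖ with hbdef
  have hb : 0 < b := lt_of_lt_of_le (by positivity) hw
  have hp0 : (0:ℝ) ≤ p := by linarith
  have hφ2b : φ ≤ 2*b := by linarith
  have habsw : ‖(φ:ℂ)+w‖ ≤ 3*b := by
    calc ‖(φ:ℂ)+w‖ ≤ ‖(φ:ℂ)‖ + b := norm_add_le _ _
      _ = φ + b := by rw [Complex.norm_real, Real.norm_eq_abs, _root_.abs_of_pos hφ]
      _ ≤ 3*b := by linarith
  have habsnn : (0:ℝ) ≤ ‖(φ:ℂ)+w‖ := norm_nonneg _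
  -- norms of the four pieces
  have nA : ‖((‖(φ : ℂ) + w‖ ^ (p - 1) : ℝ) : ℂ) * ((φ : ℂ) + w)‖
      ≤ 3^p * b^p := by
    rw [norm_mul, Complex.norm_real, Real.norm_eq_abs,
      _root_.abs_of_nonneg (Real.rpow_nonneg habsnn _)]
    calc ‖(φ:ℂ)+w‖ ^ (p-1) * ‖(φ:ℂ)+w‖
        ≤ (3*b)^(p-1) * (3*b) := by
          apply mul_le_mul (Real.rpow_le_rpow habsnn habsw (by linarith)) habsw habsnn
            (Real.rpow_nonneg (by positivity) _)
      _ = (3*b)^p := by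
          rw [← Real.rpow_add_one (by positivity : (0:ℝ) < 3*b).ne']
          congr 1; ring
      _ = 3^p * b^p := Real.mul_rpow (by norm_num) hb.le
  have nB : ‖((φ ^ p : ℝ) : ℂ)‖ ≤ 2^p * b^p := by
    rw [Complex.norm_real, Real.norm_eq_abs,
      _root_.abs_of_nonneg (Real.rpow_nonneg hφ.le _)]
    calc φ^p ≤ (2*b)^p := Real.rpow_le_rpow hφ.le hφ2b hp0
      _ = 2^p * b^p := Real.mul_rpow (by norm_num) hb.le
  have hφp1 : φ^(p-1) ≤ 2^(p-1) * b^(p-1) := by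
    calc φ^(p-1) ≤ (2*b)^(p-1) := Real.rpow_le_rpow hφ.le hφ2b (by linarith)
      _ = 2^(p-1) * b^(p-1) := Real.mul_rpow (by norm_num) hb.le
  have hbp : b^(p-1) * b = b^p := by
    rw [← Real.rpow_add_one hb.ne']; congr 1; ring
  have h2p : (2:ℝ)^(p-1) ≤ 2^p :=
    Real.rpow_le_rpow_of_exponent_le (by norm_num) (by linarith)
  have nC : ‖(((p + 1) / 2 : ℝ) : ℂ) * ((φ ^ (p - 1) : ℝ) : ℂ) * w‖
      ≤ (p+1)/2 * (2^(p-1) * b^p) := by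
    rw [norm_mul, norm_mul, Complex.norm_real, Complex.norm_real, Real.norm_eq_abs,
      Real.norm_eq_abs, _root_.abs_of_nonneg (by linarith : (0:ℝ) ≤ (p+1)/2),
      _root_.abs_of_nonneg (Real.rpow_nonneg hφ.le _), ← hbdef]
    calc (p+1)/2 * φ^(p-1) * b ≤ (p+1)/2 * (2^(p-1) * b^(p-1)) * b := by
          apply mul_le_mul_of_nonneg_right _ hb.le
          exact mul_le_mul_of_nonneg_left hφp1 (by linarith)
      _ = (p+1)/2 * (2^(p-1) * (b^(p-1)*b)) := by ring
      _ = (p+1)/2 * (2^(p-1) * b^p) := by rw [hbp]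
  have nD : ‖(((p - 1) / 2 : ℝ) : ℂ) * ((φ ^ (p - 1) : ℝ) : ℂ) * starRingEnd ℂ w‖
      ≤ (p-1)/2 * (2^(p-1) * b^p) := by
    rw [norm_mul, norm_mul, Complex.norm_real, Complex.norm_real, Real.norm_eq_abs,
      Real.norm_eq_abs, _root_.abs_of_nonneg (by linarith : (0:ℝ) ≤ (p-1)/2),
      _root_.abs_of_nonneg (Real.rpow_nonneg hφ.le _),
      Complex.norm_conj, ← hbdef]
    calc (p-1)/2 * φ^(p-1) * b ≤ (p-1)/2 * (2^(p-1) * b^(p-1)) * b := by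
          apply mul_le_mul_of_nonneg_right _ hb.le
          exact mul_le_mul_of_nonneg_left hφp1 (by linarith)
      _ = (p-1)/2 * (2^(p-1) * (b^(p-1)*b)) := by ring
      _ = (p-1)/2 * (2^(p-1) * b^p) := by rw [hbp]
  have tri : ‖((‖(φ : ℂ) + w‖ ^ (p - 1) : ℝ) : ℂ) * ((φ : ℂ) + w)
          - ((φ ^ p : ℝ) : ℂ)
          - (((p + 1) / 2 : ℝ) : ℂ) * ((φ ^ (p - 1) : ℝ) : ℂ) * w
          - (((p - 1) / 2 : ℝ) : ℂ) * ((φ ^ (p - 1) : ℝ) : ℂ) * starRingEnd ℂ w‖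
      ≤ 3^p * b^p + 2^p * b^p + (p+1)/2 * (2^(p-1) * b^p) + (p-1)/2 * (2^(p-1) * b^p) := by
    calc _ ≤ ‖((‖(φ : ℂ) + w‖ ^ (p - 1) : ℝ) : ℂ) * ((φ : ℂ) + w)
          - ((φ ^ p : ℝ) : ℂ)
          - (((p + 1) / 2 : ℝ) : ℂ) * ((φ ^ (p - 1) : ℝ) : ℂ) * w‖
          + ‖(((p - 1) / 2 : ℝ) : ℂ) * ((φ ^ (p - 1) : ℝ) : ℂ) * starRingEnd ℂ w‖ :=
          norm_sub_le _ _
      _ ≤ ‖((‖(φ : ℂ) + w‖ ^ (p - 1) : ℝ) : ℂ) * ((φ : ℂ) + w)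
          - ((φ ^ p : ℝ) : ℂ)‖
          + ‖(((p + 1) / 2 : ℝ) : ℂ) * ((φ ^ (p - 1) : ℝ) : ℂ) * w‖
          + ‖(((p - 1) / 2 : ℝ) : ℂ) * ((φ ^ (p - 1) : ℝ) : ℂ) * starRingEnd ℂ w‖ := by
          have := norm_sub_le (((‖(φ : ℂ) + w‖ ^ (p - 1) : ℝ) : ℂ) * ((φ : ℂ) + w)
            - ((φ ^ p : ℝ) : ℂ)) ((((p + 1) / 2 : ℝ) : ℂ) * ((φ ^ (p - 1) : ℝ) : ℂ) * w)
          linarith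
      _ ≤ _ := by
          have := norm_sub_le (((‖(φ : ℂ) + w‖ ^ (p - 1) : ℝ) : ℂ) * ((φ : ℂ) + w))
            ((φ ^ p : ℝ) : ℂ)
          linarith
  have hbp0 : (0:ℝ) ≤ b^p := Real.rpow_nonneg hb.le _
  have h2pp : (0:ℝ) < (2:ℝ)^p := Real.rpow_pos_of_pos (by norm_num) p
  calc _ ≤ 3^p * b^p + 2^p * b^p + (p+1)/2 * (2^(p-1) * b^p) + (p-1)/2 * (2^(p-1) * b^p) := tri
    _ = 3^p * b^p + 2^p * b^p + p * (2^(p-1) * b^p) := by ring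
    _ ≤ (3^p + 2^p + p*2^p) * b^p := by nlinarith [mul_le_mul_of_nonneg_right h2p hbp0]

end NRB

/-- Taylor remainder bound for the monic power nonlinearity: the remainder of the
linearization of `z ↦ |z|^{p-1} z` at a positive real point `φ` is controlled by
`C(φ^{p-2}|w|² + |w|^p)`. -/
theorem nonlinearity_remainder_bound (p : ℝ) (hp : 5 < p) :
    ∃ C : ℝ, 0 < C ∧ ∀ φ : ℝ, 0 < φ → ∀ w : ℂ,
      ‖((‖(φ : ℂ) + w‖ ^ (p - 1) : ℝ) : ℂ) * ((φ : ℂ) + w)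
          - ((φ ^ p : ℝ) : ℂ)
          - (((p + 1) / 2 : ℝ) : ℂ) * ((φ ^ (p - 1) : ℝ) : ℂ) * w
          - (((p - 1) / 2 : ℝ) : ℂ) * ((φ ^ (p - 1) : ℝ) : ℂ) * starRingEnd ℂ w‖
        ≤ C * (φ ^ (p - 2) * ‖w‖ ^ 2 + ‖w‖ ^ p) := by
  have h3p : (0:ℝ) < 3^p := Real.rpow_pos_of_pos (by norm_num) p
  have h2pp : (0:ℝ) < 2^p := Real.rpow_pos_of_pos (by norm_num) p
  have hp0 : (0:ℝ) < p := by linarith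
  refine ⟨40*p^2*3^p + (3^p + 2^p + p*2^p), by nlinarith, ?_⟩
  intro φ hφ w
  have hkey : ‖((‖(φ : ℂ) + w‖ ^ (p - 1) : ℝ) : ℂ) * ((φ : ℂ) + w)
          - ((φ ^ p : ℝ) : ℂ)
          - (((p + 1) / 2 : ℝ) : ℂ) * ((φ ^ (p - 1) : ℝ) : ℂ) * w
          - (((p - 1) / 2 : ℝ) : ℂ) * ((φ ^ (p - 1) : ℝ) : ℂ) * starRingEnd ℂ w‖
      = ‖NRB.gf p φ w 1 - NRB.gf p φ w 0 - NRB.gf' p φ w 0‖ := by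
    rw [NRB.identify p φ hφ w]
  have hX : (0:ℝ) ≤ φ^(p-2) * ‖w‖^2 := by positivity
  have hY : (0:ℝ) ≤ ‖w‖ ^ p := Real.rpow_nonneg (norm_nonneg w) p
  rcases le_or_gt (‖w‖) (φ/2) with hcase | hcase
  · rw [hkey]
    calc ‖NRB.gf p φ w 1 - NRB.gf p φ w 0 - NRB.gf' p φ w 0‖
        ≤ 40*p^2*3^p*(φ^(p-2)*‖w‖^2) := NRB.small p φ hp hφ w hcase
      _ ≤ (40*p^2*3^p + (3^p + 2^p + p*2^p))
            * (φ ^ (p - 2) * ‖w‖ ^ 2 + ‖w‖ ^ p) := by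
          nlinarith [mul_nonneg (by positivity : (0:ℝ) ≤ 40*p^2*3^p) hY,
            mul_nonneg (by nlinarith : (0:ℝ) ≤ 3^p + 2^p + p*2^p) (add_nonneg hX hY)]
  · calc ‖((‖(φ : ℂ) + w‖ ^ (p - 1) : ℝ) : ℂ) * ((φ : ℂ) + w)
          - ((φ ^ p : ℝ) : ℂ)
          - (((p + 1) / 2 : ℝ) : ℂ) * ((φ ^ (p - 1) : ℝ) : ℂ) * w
          - (((p - 1) / 2 : ℝ) : ℂ) * ((φ ^ (p - 1) : ℝ) : ℂ) * starRingEnd ℂ w‖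
        ≤ (3^p + 2^p + p*2^p) * ‖w‖ ^ p := NRB.big p φ hp hφ w hcase.le
      _ ≤ (40*p^2*3^p + (3^p + 2^p + p*2^p))
            * (φ ^ (p - 2) * ‖w‖ ^ 2 + ‖w‖ ^ p) := by
          nlinarith [mul_nonneg (by positivity : (0:ℝ) ≤ 40*p^2*3^p) (add_nonneg hX hY),
            mul_nonneg (by nlinarith : (0:ℝ) ≤ 3^p + 2^p + p*2^p) hX]
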